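/- For every finite connected simple graph G, mobmv(G) ≥ ω(G) and mobmv*(G) ≥ ω(G) − 1. -/

import Mathlib

open SimpleGraph

variable {V : Type*} {W : Type*}

/-- `S` is a general position set of `G`: no shortest path of `G` contains more than two
vertices of `S`. -/
def IsGenPosSet (G : SimpleGraph V) (S : Set V) : Prop :=
  ∀ ⦃u v : V⦄ (p : G.Walk u v), p.IsPath → p.length = G.dist u v →
    (S ∩ {x | x ∈ p.support}).ncard ≤ 2

/-- `S` is a mutual visibility set of `G`: any two vertices of `S` are joined by a shortest
path containing no further vertex of `S`. -/
def IsMutVisSet (G : SimpleGraph V) (S : Set V) : Prop :=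
  ∀ ⦃u⦄, u ∈ S → ∀ ⦃v⦄, v ∈ S → ∃ p : G.Walk u v,
    p.IsPath ∧ p.length = G.dist u v ∧ ∀ x ∈ p.support, x ∈ S → x = u ∨ x = v

/-- A legal move (with respect to the position property `P`) of a configuration of `t` robots
on distinct vertices: one robot moves to an adjacent unoccupied vertex, and the resulting set
of occupied vertices again satisfies `P`. -/
def LegalMove (G : SimpleGraph V) (P : Set V → Prop) {t : ℕ} (f g : Fin t ↪ V) : Prop :=
  ∃ i : Fin t, G.Adj (f i) (g i) ∧ g i ∉ Set.range ⇑f ∧ (∀ j, j ≠ i → g j = f j) ∧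
    P (Set.range ⇑g)

/-- A configuration is a mobile `P`-configuration if it satisfies `P` and there is a sequence
of legal moves starting from it such that every vertex is visited by some robot. -/
def IsMobileConfig (G : SimpleGraph V) (P : Set V → Prop) {t : ℕ} (f : Fin t ↪ V) : Prop :=
  P (Set.range ⇑f) ∧ ∃ (N : ℕ) (c : ℕ → (Fin t ↪ V)), c 0 = f ∧
    (∀ k < N, LegalMove G P (c k) (c (k + 1))) ∧ ∀ v : V, ∃ k ≤ N, ∃ i, c k i = v

/-- A configuration is completely mobile if it is mobile and moreover every robot can visit
every vertex via a sequence of legal moves. -/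
def IsCompletelyMobileConfig (G : SimpleGraph V) (P : Set V → Prop) {t : ℕ}
    (f : Fin t ↪ V) : Prop :=
  IsMobileConfig G P f ∧ ∀ (v : V) (i : Fin t), ∃ (N : ℕ) (c : ℕ → (Fin t ↪ V)), c 0 = f ∧
    (∀ k < N, LegalMove G P (c k) (c (k + 1))) ∧ ∃ k ≤ N, c k i = v

/-- The mobile general position number `mob(G)`. -/
noncomputable def mobGP (G : SimpleGraph V) : ℕ :=
  sSup {t : ℕ | ∃ f : Fin t ↪ V, IsMobileConfig G (IsGenPosSet G) f}

/-- The completely mobile general position number `mob*(G)`. -/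
noncomputable def cmobGP (G : SimpleGraph V) : ℕ :=
  sSup {t : ℕ | ∃ f : Fin t ↪ V, IsCompletelyMobileConfig G (IsGenPosSet G) f}

/-- The mobile mutual visibility number `mobmv(G)`. -/
noncomputable def mobMV (G : SimpleGraph V) : ℕ :=
  sSup {t : ℕ | ∃ f : Fin t ↪ V, IsMobileConfig G (IsMutVisSet G) f}

/-- The completely mobile mutual visibility number `mobmv*(G)`. -/
noncomputable def cmobMV (G : SimpleGraph V) : ℕ :=
  sSup {t : ℕ | ∃ f : Fin t ↪ V, IsCompletelyMobileConfig G (IsMutVisSet G) f}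

/-- The mutual visibility number `μ(G)`. -/
noncomputable def muMV (G : SimpleGraph V) : ℕ :=
  sSup {n : ℕ | ∃ S : Set V, IsMutVisSet G S ∧ S.ncard = n}

/-- `μ₂(G)`: the largest cardinality of a mutual visibility set whose vertices are pairwise at
distance at most `2`. -/
noncomputable def muMV2 (G : SimpleGraph V) : ℕ :=
  sSup {n : ℕ | ∃ S : Set V, IsMutVisSet G S ∧ (∀ u ∈ S, ∀ v ∈ S, G.dist u v ≤ 2) ∧
    S.ncard = n}

/-- The join `G ∨ H` of two graphs: the disjoint union together with all edges between the
two vertex sets. -/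
def graphJoin (G : SimpleGraph V) (H : SimpleGraph W) : SimpleGraph (V ⊕ W) where
  Adj x y := match x, y with
    | Sum.inl a, Sum.inl b => G.Adj a b
    | Sum.inr a, Sum.inr b => H.Adj a b
    | Sum.inl _, Sum.inr _ => True
    | Sum.inr _, Sum.inl _ => True
  symm := by constructor; rintro (a | a) (b | b) h <;> simp_all <;> exact h.symm
  loopless := by constructor; rintro (a | a) h <;> simp_all

/-- The strong product `G ⊠ H` of two graphs. -/
def strongProd (G : SimpleGraph V) (H : SimpleGraph W) : SimpleGraph (V × W) where
  Adj x y := (x.1 = y.1 ∧ H.Adj x.2 y.2) ∨ (x.2 = y.2 ∧ G.Adj x.1 y.1) ∨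
    (G.Adj x.1 y.1 ∧ H.Adj x.2 y.2)
  symm := by
    constructor
    rintro ⟨a, b⟩ ⟨c, d⟩ (⟨h1, h2⟩ | ⟨h1, h2⟩ | ⟨h1, h2⟩)
    · exact Or.inl ⟨h1.symm, h2.symm⟩
    · exact Or.inr (Or.inl ⟨h1.symm, h2.symm⟩)
    · exact Or.inr (Or.inr ⟨h1.symm, h2.symm⟩)
  loopless := by constructor; rintro ⟨a, b⟩ (⟨_, h⟩ | ⟨_, h⟩ | ⟨h, _⟩) <;> simp_all

/-- A vertex `u` is a hub if any two distinct non-adjacent vertices different from `u` are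
both adjacent to `u`. -/
def IsHub (G : SimpleGraph V) (u : V) : Prop :=
  ∀ ⦃w₁ w₂ : V⦄, w₁ ≠ u → w₂ ≠ u → w₁ ≠ w₂ → ¬G.Adj w₁ w₂ → G.Adj w₁ u ∧ G.Adj w₂ u

/-- A block graph: every block is complete; equivalently, the vertices of any cycle form a
clique. -/
def IsBlockGraph (G : SimpleGraph V) : Prop :=
  ∀ (v : V) (c : G.Walk v v), c.IsCycle → G.IsClique {x | x ∈ c.support}

/-- The graph obtained from the complete graph `K n` (on vertices `1, ..., n`) by attaching
one pendant vertex `0`, adjacent only to vertex `1`. -/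
def cliqueWithLeaf (n : ℕ) : SimpleGraph (Fin (n + 1)) :=
  SimpleGraph.fromRel (fun i j => (i ≠ 0 ∧ j ≠ 0) ∨ (i = 0 ∧ j = 1))

/-- `G` is (isomorphic to) a path graph. -/
def IsPathGraph (G : SimpleGraph V) : Prop :=
  ∃ n : ℕ, Nonempty (G ≃g pathGraph n)
section MobMVAux

variable {G : SimpleGraph V}

lemma mutvis_mono {S T : Set V} (h : T ⊆ S) (hS : IsMutVisSet G S) : IsMutVisSet G T := by
  intro u hu v hv
  obtain ⟨p, hp, hl, hsup⟩ := hS (h hu) (h hv)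
  exact ⟨p, hp, hl, fun x hx hxT => hsup x hx (h hxT)⟩

lemma split_dist (hconn : G.Connected) {u v y : V} (p : G.Walk u v)
    (hl : p.length = G.dist u v) (hy : y ∈ p.support) :
    G.dist u y + G.dist y v = G.dist u v := by
  classical
  have h1 : G.dist u y ≤ (p.takeUntil y hy).length := SimpleGraph.dist_le _
  have h2 : G.dist y v ≤ (p.dropUntil y hy).length := SimpleGraph.dist_le _
  have h3 : (p.takeUntil y hy).length + (p.dropUntil y hy).length = p.length := by
    have := congrArg SimpleGraph.Walk.length (p.take_spec hy)
    rwa [SimpleGraph.Walk.length_append] at this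
  have h4 : G.dist u v ≤ G.dist u y + G.dist y v := hconn.dist_triangle
  omega

lemma geodesic_avoid (hconn : G.Connected) {Q : Finset V} (hQ : G.IsClique ↑Q)
    {w : V} (hw : w ∈ Q) {x : V} (hmin : ∀ u ∈ Q, G.dist x w ≤ G.dist x u)
    {u : V} (hu : u ∈ Q) (huw : u ≠ w) :
    ∃ p : G.Walk x u, p.IsPath ∧ p.length = G.dist x u ∧
      ∀ y ∈ p.support, y ∈ Q → y = u ∨ y = w := by
  classical
  obtain ⟨p₁, hp₁, hl₁⟩ := hconn.exists_path_of_dist x w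
  have hQ1 : ∀ y ∈ p₁.support, y ∈ Q → y = w := by
    intro y hy hyQ
    have hsplit := split_dist hconn p₁ hl₁ hy
    have h1 := hmin y hyQ
    have h0 : G.dist y w = 0 := by omega
    exact hconn.dist_eq_zero_iff.mp h0
  have hadj : G.Adj w u := hQ hw hu (fun h => huw h.symm)
  have hwu1 : G.dist w u = 1 := SimpleGraph.dist_eq_one_iff_adj.mpr hadj
  have hle : G.dist x u ≤ G.dist x w + 1 := by
    have := hconn.dist_triangle (u := x) (v := w) (w := u)
    omega
  have hge : G.dist x w ≤ G.dist x u := hmin u hu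
  rcases eq_or_lt_of_le hge with heq | hlt
  · obtain ⟨p, hp, hl⟩ := hconn.exists_path_of_dist x u
    refine ⟨p, hp, hl, fun y hy hyQ => ?_⟩
    left
    have hsplit := split_dist hconn p hl hy
    have h1 := hmin y hyQ
    have h0 : G.dist y u = 0 := by omega
    exact hconn.dist_eq_zero_iff.mp h0
  · have heq : G.dist x u = G.dist x w + 1 := by omega
    have hu_not : u ∉ p₁.support := fun h => huw (hQ1 u h hu)
    refine ⟨p₁.concat hadj, ?_, ?_, ?_⟩
    · rw [SimpleGraph.Walk.isPath_def, SimpleGraph.Walk.support_concat,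
        List.nodup_append']
      refine ⟨hp₁.support_nodup, List.nodup_singleton u, fun a ha hb => ?_⟩
      rw [List.mem_singleton] at hb
      exact hu_not (hb ▸ ha)
    · rw [SimpleGraph.Walk.length_concat, hl₁, heq]
    · intro y hy hyQ
      rw [SimpleGraph.Walk.support_concat, List.mem_append] at hy
      rcases hy with hy | hy
      · exact Or.inr (hQ1 y hy hyQ)
      · exact Or.inl (by simpa using hy)

lemma mutvis_lemmaA (hconn : G.Connected) {Q : Finset V} (hQ : G.IsClique ↑Q)
    {w : V} (hw : w ∈ Q) {x : V} (hmin : ∀ u ∈ Q, G.dist x w ≤ G.dist x u) :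
    IsMutVisSet G ((↑Q \ {w}) ∪ {x}) := by
  have key : ∀ u, u ∈ Q → u ≠ w → ∃ p : G.Walk x u, p.IsPath ∧ p.length = G.dist x u ∧
      ∀ y ∈ p.support, y ∈ ((↑Q \ {w} : Set V) ∪ {x}) → y = x ∨ y = u := by
    intro u hu huw
    obtain ⟨p, hp, hl, hQs⟩ := geodesic_avoid hconn hQ hw hmin hu huw
    refine ⟨p, hp, hl, fun y hy hyS => ?_⟩
    rcases hyS with ⟨hyQ, hyw⟩ | hyx
    · rcases hQs y hy (by exact_mod_cast hyQ) with h | h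
      · exact Or.inr h
      · exact absurd h hyw
    · exact Or.inl hyx
  intro a ha b hb
  by_cases hab : a = b
  · subst hab
    exact ⟨SimpleGraph.Walk.nil, SimpleGraph.Walk.IsPath.nil, by simp [SimpleGraph.dist_self],
      by simp⟩
  rcases ha with ⟨haQ, haw⟩ | hax
  · rcases hb with ⟨hbQ, hbw⟩ | hbx
    · have hadj : G.Adj a b := hQ haQ hbQ hab
      refine ⟨SimpleGraph.Walk.cons hadj SimpleGraph.Walk.nil, by simp [hadj.ne], ?_, ?_⟩
      · simp [SimpleGraph.dist_eq_one_iff_adj.mpr hadj]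
      · intro y hy _
        simpa using hy
    · have hbx' : b = x := hbx
      subst hbx'
      obtain ⟨p, hp, hl, hcond⟩ := key a (by exact_mod_cast haQ) (by simpa using haw)
      refine ⟨p.reverse, hp.reverse, ?_, ?_⟩
      · rw [SimpleGraph.Walk.length_reverse, hl, SimpleGraph.dist_comm]
      · intro y hy hyS
        rw [SimpleGraph.Walk.support_reverse, List.mem_reverse] at hy
        rcases hcond y hy hyS with h | h
        · exact Or.inr h
        · exact Or.inl h
  · have hax' : a = x := hax
    subst hax'
    rcases hb with ⟨hbQ, hbw⟩ | hbx
    · obtain ⟨p, hp, hl, hcond⟩ := key b (by exact_mod_cast hbQ) (by simpa using hbw)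
      exact ⟨p, hp, hl, hcond⟩
    · exact absurd (hbx.symm.trans rfl) hab

lemma mutvis_subclique (hconn : G.Connected) {Q : Finset V} (hQ : G.IsClique ↑Q)
    {S : Set V} (hS : S ⊆ ↑Q) : IsMutVisSet G S := by
  rcases Q.eq_empty_or_nonempty with rfl | ⟨w, hw⟩
  · intro u hu
    simp only [Finset.coe_empty, Set.subset_empty_iff] at hS
    exact absurd (hS ▸ hu) (Set.notMem_empty u)
  · refine mutvis_mono ?_ (mutvis_lemmaA hconn hQ hw (x := w)
      (fun u _ => by simp [SimpleGraph.dist_self]))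
    intro y hy
    by_cases hyw : y = w
    · exact Or.inr hyw
    · exact Or.inl ⟨hS hy, hyw⟩

def updEmb {t : ℕ} (f : Fin t ↪ V) (i : Fin t) (x : V) (hx : x ∉ Set.range ⇑f) :
    Fin t ↪ V :=
  ⟨fun j => if j = i then x else f j, by
    intro a b hab
    dsimp only at hab
    split_ifs at hab with h1 h2 h2
    · rw [h1, h2]
    · exact absurd ⟨b, hab.symm⟩ hx
    · exact absurd ⟨a, hab⟩ hx
    · exact f.injective hab⟩

lemma updEmb_apply_self {t : ℕ} (f : Fin t ↪ V) (i : Fin t) (x : V)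
    (hx : x ∉ Set.range ⇑f) : updEmb f i x hx i = x := by
  show (if i = i then x else f i) = x
  simp

lemma updEmb_apply_ne {t : ℕ} (f : Fin t ↪ V) (i : Fin t) (x : V)
    (hx : x ∉ Set.range ⇑f) {j : Fin t} (hj : j ≠ i) : updEmb f i x hx j = f j := by
  show (if j = i then x else f j) = f j
  simp [hj]

lemma range_updEmb {t : ℕ} (f : Fin t ↪ V) (i : Fin t) (x : V)
    (hx : x ∉ Set.range ⇑f) :
    Set.range ⇑(updEmb f i x hx) = insert x (Set.range ⇑f \ {f i}) := by
  ext z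
  constructor
  · rintro ⟨j, rfl⟩
    by_cases hj : j = i
    · subst hj
      exact Or.inl (updEmb_apply_self f j x hx)
    · rw [updEmb_apply_ne f i x hx hj]
      exact Or.inr ⟨⟨j, rfl⟩, fun h => hj (f.injective h)⟩
  · rintro (rfl | ⟨⟨j, rfl⟩, hz⟩)
    · exact ⟨i, updEmb_apply_self _ _ _ _⟩
    · have hj : j ≠ i := fun h => hz (by simp [h])
      exact ⟨j, updEmb_apply_ne f i x hx hj⟩

/-- Reachability by legal moves for the mutual-visibility property. -/
def ReachMV (G : SimpleGraph V) {t : ℕ} (f g : Fin t ↪ V) : Prop :=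
  Relation.ReflTransGen (LegalMove G (IsMutVisSet G)) f g

lemma ReachMV.mv {t : ℕ} {f g : Fin t ↪ V} (hf : IsMutVisSet G (Set.range ⇑f))
    (h : ReachMV G f g) : IsMutVisSet G (Set.range ⇑g) := by
  induction h with
  | refl => exact hf
  | tail _ hstep _ => obtain ⟨i, _, _, _, hP⟩ := hstep; exact hP

lemma legal_symm {t : ℕ} {f g : Fin t ↪ V} (h : LegalMove G (IsMutVisSet G) f g)
    (hf : IsMutVisSet G (Set.range ⇑f)) : LegalMove G (IsMutVisSet G) g f := by
  obtain ⟨i, hadj, hnr, hstay, _⟩ := h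
  refine ⟨i, hadj.symm, ?_, fun j hj => (hstay j hj).symm, hf⟩
  rintro ⟨j, hj⟩
  by_cases hji : j = i
  · subst hji
    exact hnr ⟨_, hj.symm⟩
  · rw [hstay j hji] at hj
    exact hji (f.injective hj)

lemma reachMV_symm {t : ℕ} {f g : Fin t ↪ V} (hf : IsMutVisSet G (Set.range ⇑f))
    (h : ReachMV G f g) : ReachMV G g f := by
  induction h with
  | refl => exact Relation.ReflTransGen.refl
  | tail hr hstep ih =>
      exact Relation.ReflTransGen.head (legal_symm hstep (ReachMV.mv hf hr)) ih

lemma excursion (hconn : G.Connected) {Q : Finset V} (hQ : G.IsClique ↑Q)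
    {t : ℕ} (f : Fin t ↪ V) (hfQ : Set.range ⇑f ⊆ ↑Q) (i₀ : Fin t)
    {w v : V} (hfw : f i₀ = w) (p : G.Walk w v)
    (hrad : ∀ y ∈ p.support, ∀ u ∈ Q, G.dist y w ≤ G.dist y u) :
    ∀ n ≤ p.length, ∃ g : Fin t ↪ V, ReachMV G f g ∧ g i₀ = p.getVert n ∧
      ∀ j, j ≠ i₀ → g j = f j := by
  have hwQ : w ∈ Q := by
    have := hfQ ⟨i₀, hfw⟩
    exact_mod_cast this
  intro n
  induction n with
  | zero =>
      intro _
      exact ⟨f, Relation.ReflTransGen.refl, by rw [SimpleGraph.Walk.getVert_zero, hfw],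
        fun _ _ => rfl⟩
  | succ n ih =>
      intro hn
      obtain ⟨g, hreach, hgi, hgj⟩ := ih (by omega)
      have hadj : G.Adj (p.getVert n) (p.getVert (n + 1)) := p.adj_getVert_succ (by omega)
      have hmem : p.getVert (n + 1) ∈ p.support :=
        SimpleGraph.Walk.mem_support_iff_exists_getVert.mpr ⟨n + 1, rfl, hn⟩
      have hnotr : p.getVert (n + 1) ∉ Set.range ⇑g := by
        rintro ⟨j, hj⟩
        by_cases hji : j = i₀
        · subst hji
          rw [hgi] at hj
          exact hadj.ne hj
        · have hfj : f j = p.getVert (n + 1) := by rw [← hgj j hji, hj]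
          have hfjQ : f j ∈ Q := by
            have := hfQ ⟨j, rfl⟩
            exact_mod_cast this
          have h0 : G.dist (p.getVert (n + 1)) w = 0 := by
            have h1 := hrad _ hmem (f j) hfjQ
            rw [hfj, SimpleGraph.dist_self] at h1
            omega
          have hW : p.getVert (n + 1) = w := hconn.dist_eq_zero_iff.mp h0
          exact hji (f.injective (by rw [hfj, hW, hfw]))
      refine ⟨updEmb g i₀ (p.getVert (n + 1)) hnotr, hreach.tail ?_,
        updEmb_apply_self _ _ _ _, fun j hj => by
          rw [updEmb_apply_ne _ _ _ _ hj, hgj j hj]⟩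
      refine ⟨i₀, ?_, ?_, fun j hj => updEmb_apply_ne _ _ _ _ hj, ?_⟩
      · rw [hgi, updEmb_apply_self]
        exact hadj
      · rw [updEmb_apply_self]
        exact hnotr
      · rw [range_updEmb]
        refine mutvis_mono ?_ (mutvis_lemmaA hconn hQ hwQ (x := p.getVert (n + 1))
          (fun u hu => hrad _ hmem u hu))
        rintro z (rfl | ⟨⟨j, rfl⟩, hz⟩)
        · exact Or.inr rfl
        · have hji : j ≠ i₀ := fun h => hz (by simp [h])
          refine Or.inl ⟨?_, ?_⟩
          · rw [hgj j hji]
            exact hfQ ⟨j, rfl⟩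
          · rw [hgj j hji]
            intro h
            have : f j = f i₀ := by rw [hfw]; exact_mod_cast h
            exact hji (f.injective this)

lemma radial_geodesic (hconn : G.Connected) {Q : Finset V} {w v : V} (_hw : w ∈ Q)
    (hmin : ∀ u ∈ Q, G.dist v w ≤ G.dist v u) :
    ∃ p : G.Walk w v, ∀ y ∈ p.support, ∀ u ∈ Q, G.dist y w ≤ G.dist y u := by
  obtain ⟨p, _, hl⟩ := hconn.exists_path_of_dist w v
  refine ⟨p, fun y hy u hu => ?_⟩
  have hsplit : G.dist w y + G.dist y v = G.dist w v := split_dist hconn p hl hy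
  have h1 : G.dist v w ≤ G.dist v u := hmin u hu
  have h2 : G.dist v u ≤ G.dist v y + G.dist y u := hconn.dist_triangle
  have e1 : G.dist v w = G.dist w v := SimpleGraph.dist_comm
  have e2 : G.dist v y = G.dist y v := SimpleGraph.dist_comm
  have e3 : G.dist y w = G.dist w y := SimpleGraph.dist_comm
  omega

def RouteMV (G : SimpleGraph V) {t : ℕ} (f g : Fin t ↪ V) (A : Set V) : Prop :=
  ∃ N : ℕ, ∃ c : ℕ → (Fin t ↪ V), c 0 = f ∧
    (∀ k < N, LegalMove G (IsMutVisSet G) (c k) (c (k + 1))) ∧ c N = g ∧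
    ∀ v ∈ A, ∃ k ≤ N, ∃ i, (c k) i = v

lemma routeMV_refl {t : ℕ} (f : Fin t ↪ V) : RouteMV G f f (Set.range ⇑f) :=
  ⟨0, fun _ => f, rfl, fun k hk => absurd hk (by omega), rfl,
    fun v hv => ⟨0, le_refl 0, hv⟩⟩

lemma routeMV_mono {t : ℕ} {f g : Fin t ↪ V} {A B : Set V} (h : RouteMV G f g A)
    (hBA : B ⊆ A) : RouteMV G f g B := by
  obtain ⟨N, c, h0, hleg, hN, hvis⟩ := h
  exact ⟨N, c, h0, hleg, hN, fun v hv => hvis v (hBA hv)⟩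

lemma routeMV_trans {t : ℕ} {f g h : Fin t ↪ V} {A B : Set V}
    (h1 : RouteMV G f g A) (h2 : RouteMV G g h B) : RouteMV G f h (A ∪ B) := by
  obtain ⟨N₁, c₁, hc0, hleg1, hcN, hvis1⟩ := h1
  obtain ⟨N₂, c₂, hc0', hleg2, hcN', hvis2⟩ := h2
  refine ⟨N₁ + N₂, fun k => if k ≤ N₁ then c₁ k else c₂ (k - N₁), by simp [hc0], ?_, ?_, ?_⟩
  · intro k hk
    by_cases h' : k + 1 ≤ N₁
    · simp only [if_pos (by omega : k ≤ N₁), if_pos h']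
      exact hleg1 k (by omega)
    · by_cases h'' : k ≤ N₁
      · have hkN : k = N₁ := by omega
        subst hkN
        simp only [if_pos h'', if_neg h']
        rw [hcN, ← hc0']
        have he : k + 1 - k = 1 := by omega
        rw [he]
        exact hleg2 0 (by omega)
      · simp only [if_neg h'', if_neg h']
        have he : k + 1 - N₁ = (k - N₁) + 1 := by omega
        rw [he]
        exact hleg2 (k - N₁) (by omega)
  · by_cases h' : N₁ + N₂ ≤ N₁
    · have hN2 : N₂ = 0 := by omega
      simp only [if_pos h']
      have : N₁ + N₂ = N₁ := by omega
      rw [this, hcN]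
      rw [hN2, hc0'] at hcN'
      exact hcN'
    · simp only [if_neg h']
      have he : N₁ + N₂ - N₁ = N₂ := by omega
      rw [he, hcN']
  · intro v hv
    rcases hv with hv | hv
    · obtain ⟨k, hk, i, hki⟩ := hvis1 v hv
      exact ⟨k, by omega, i, by simp only [if_pos hk]; exact hki⟩
    · obtain ⟨k, hk, i, hki⟩ := hvis2 v hv
      refine ⟨N₁ + k, by omega, i, ?_⟩
      by_cases hk0 : k = 0
      · subst hk0
        simp only [Nat.add_zero, if_pos (le_refl N₁)]
        rw [hcN, ← hc0']
        exact hki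
      · simp only [if_neg (by omega : ¬ N₁ + k ≤ N₁)]
        have he : N₁ + k - N₁ = k := by omega
        rw [he]
        exact hki

lemma legal_route {t : ℕ} {f g : Fin t ↪ V} (h : LegalMove G (IsMutVisSet G) f g) :
    RouteMV G f g ∅ := by
  refine ⟨1, fun k => if k = 0 then f else g, by simp, ?_, by simp, by simp⟩
  intro k hk
  have hk0 : k = 0 := by omega
  subst hk0
  simpa using h

lemma reachMV_route {t : ℕ} {f g : Fin t ↪ V} (h : ReachMV G f g) :
    RouteMV G f g ∅ := by
  induction h with
  | refl => exact routeMV_mono (routeMV_refl f) (Set.empty_subset _)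
  | tail _ hstep ih =>
      exact routeMV_mono (routeMV_trans ih (legal_route hstep)) (by simp)

lemma reachMV_route' {t : ℕ} {f g : Fin t ↪ V} (h : ReachMV G f g) :
    RouteMV G f g (Set.range ⇑g) :=
  routeMV_mono (routeMV_trans (reachMV_route h) (routeMV_refl g)) (by simp)

lemma mobile_of_visits {t : ℕ} [Fintype V] (f₀ : Fin t ↪ V)
    (hMV : IsMutVisSet G (Set.range ⇑f₀))
    (hvis : ∀ v : V, ∃ g : Fin t ↪ V, ReachMV G f₀ g ∧ ∃ i, g i = v) :
    IsMobileConfig G (IsMutVisSet G) f₀ := by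
  refine ⟨hMV, ?_⟩
  have hv : ∀ v : V, RouteMV G f₀ f₀ {v} := by
    intro v
    obtain ⟨g, hg, i, hgi⟩ := hvis v
    have r1 : RouteMV G f₀ g (Set.range ⇑g) := reachMV_route' hg
    have r2 : RouteMV G g f₀ ∅ := reachMV_route (reachMV_symm hMV hg)
    refine routeMV_mono (routeMV_trans r1 r2) ?_
    rintro z rfl
    exact Or.inl ⟨i, hgi⟩
  have key : ∀ l : List V, RouteMV G f₀ f₀ {v | v ∈ l} := by
    intro l
    induction l with
    | nil => exact routeMV_mono (routeMV_refl f₀) (by simp)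
    | cons a l ih =>
        refine routeMV_mono (routeMV_trans (hv a) ih) ?_
        intro z hz
        rcases List.mem_cons.mp hz with rfl | hz
        · exact Or.inl rfl
        · exact Or.inr hz
  obtain ⟨N, c, h0, hleg, _, hvisall⟩ := key Finset.univ.toList
  exact ⟨N, c, h0, hleg, fun v => hvisall v (by simp [Finset.mem_toList])⟩

lemma robot_to (hconn : G.Connected) {Q : Finset V} (hQ : G.IsClique ↑Q)
    {t : ℕ} (f₀ : Fin t ↪ V) (hrange : Set.range ⇑f₀ ⊆ ↑Q)
    (hstrict : ∃ q ∈ Q, q ∉ Set.range ⇑f₀) (i : Fin t) {w : V} (hw : w ∈ Q) :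
    ∃ f' : Fin t ↪ V, ReachMV G f₀ f' ∧ f' i = w ∧ Set.range ⇑f' ⊆ ↑Q := by
  by_cases hfi : f₀ i = w
  · exact ⟨f₀, Relation.ReflTransGen.refl, hfi, hrange⟩
  have hfiQ : f₀ i ∈ Q := by exact_mod_cast hrange ⟨i, rfl⟩
  by_cases hwo : w ∈ Set.range ⇑f₀
  · obtain ⟨j, hj⟩ := hwo
    have hji : j ≠ i := fun h => hfi (h ▸ hj)
    obtain ⟨q, hq, hqn⟩ := hstrict
    have hqw : q ≠ w := fun h => hqn (h ▸ ⟨j, hj⟩)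
    set f₁ := updEmb f₀ j q hqn with hf₁
    have hrange₁ : Set.range ⇑f₁ ⊆ ↑Q := by
      rw [hf₁, range_updEmb]
      rintro z (rfl | ⟨hz, _⟩)
      · exact_mod_cast hq
      · exact hrange hz
    have hleg1 : LegalMove G (IsMutVisSet G) f₀ f₁ := by
      refine ⟨j, ?_, hqn ∘ (by rw [hf₁, updEmb_apply_self]; exact fun h => h), ?_, ?_⟩
      · rw [hf₁, updEmb_apply_self, hj]
        exact hQ (by exact_mod_cast hw) (by exact_mod_cast hq) (Ne.symm hqw)
      · exact fun k hk => updEmb_apply_ne _ _ _ _ hk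
      · exact mutvis_subclique hconn hQ hrange₁
    have hwn₁ : w ∉ Set.range ⇑f₁ := by
      rw [hf₁, range_updEmb]
      rintro (rfl | ⟨⟨k, hk⟩, hne⟩)
      · exact hqw rfl
      · have : k = j := f₀.injective (by rw [hk, hj])
        exact hne (by rw [hj]; exact rfl)
    set f₂ := updEmb f₁ i w hwn₁ with hf₂
    have hf₁i : f₁ i = f₀ i := updEmb_apply_ne _ _ _ _ (fun h => hji h.symm)
    have hrange₂ : Set.range ⇑f₂ ⊆ ↑Q := by
      rw [hf₂, range_updEmb]
      rintro z (rfl | ⟨hz, _⟩)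
      · exact_mod_cast hw
      · exact hrange₁ hz
    have hleg2 : LegalMove G (IsMutVisSet G) f₁ f₂ := by
      refine ⟨i, ?_, ?_, fun k hk => updEmb_apply_ne _ _ _ _ hk, ?_⟩
      · rw [hf₂, updEmb_apply_self, hf₁i]
        exact hQ (by exact_mod_cast hfiQ) (by exact_mod_cast hw) hfi
      · rw [hf₂, updEmb_apply_self]
        exact hwn₁
      · exact mutvis_subclique hconn hQ hrange₂
    exact ⟨f₂, (Relation.ReflTransGen.refl.tail hleg1).tail hleg2,
      by rw [hf₂, updEmb_apply_self], hrange₂⟩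
  · set f₁ := updEmb f₀ i w hwo with hf₁
    have hrange₁ : Set.range ⇑f₁ ⊆ ↑Q := by
      rw [hf₁, range_updEmb]
      rintro z (rfl | ⟨hz, _⟩)
      · exact_mod_cast hw
      · exact hrange hz
    have hleg1 : LegalMove G (IsMutVisSet G) f₀ f₁ := by
      refine ⟨i, ?_, ?_, fun k hk => updEmb_apply_ne _ _ _ _ hk, ?_⟩
      · rw [hf₁, updEmb_apply_self]
        exact hQ (by exact_mod_cast hfiQ) (by exact_mod_cast hw) hfi
      · rw [hf₁, updEmb_apply_self]
        exact hwo
      · exact mutvis_subclique hconn hQ hrange₁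
    exact ⟨f₁, Relation.ReflTransGen.refl.tail hleg1, by rw [hf₁, updEmb_apply_self], hrange₁⟩

lemma reach_vertex (hconn : G.Connected) {Q : Finset V} (hQ : G.IsClique ↑Q)
    {t : ℕ} (f₀ : Fin t ↪ V) (hrange : Set.range ⇑f₀ ⊆ ↑Q)
    (hstrict : ∃ q ∈ Q, q ∉ Set.range ⇑f₀) (i : Fin t) (v : V) :
    ∃ g : Fin t ↪ V, ReachMV G f₀ g ∧ g i = v := by
  obtain ⟨q, hq, _⟩ := id hstrict
  obtain ⟨w, hw, hmin⟩ := Finset.exists_min_image Q (fun u => G.dist v u) ⟨q, hq⟩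
  obtain ⟨f', hr1, hfw, hrange'⟩ := robot_to hconn hQ f₀ hrange hstrict i hw
  obtain ⟨p, hrad⟩ := radial_geodesic hconn hw hmin
  obtain ⟨g, hr2, hgi, _⟩ := excursion hconn hQ f' hrange' i hfw p hrad p.length (le_refl _)
  exact ⟨g, hr1.trans hr2, by rw [hgi, SimpleGraph.Walk.getVert_length]⟩

noncomputable def embOf (S : Finset V) : Fin S.card ↪ V :=
  S.equivFin.symm.toEmbedding.trans (Function.Embedding.subtype _)

lemma range_embOf (S : Finset V) : Set.range ⇑(embOf S) = ↑S := by
  ext z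
  constructor
  · rintro ⟨k, rfl⟩
    exact (S.equivFin.symm k).2
  · intro hz
    exact ⟨S.equivFin ⟨z, hz⟩, by simp [embOf]⟩

end MobMVAux

theorem stmt_3 {V : Type*} [Fintype V] (G : SimpleGraph V) (hconn : G.Connected) :
    G.cliqueNum ≤ mobMV G ∧ G.cliqueNum - 1 ≤ cmobMV G := by
  classical
  obtain ⟨Q, hQnc⟩ := G.exists_isNClique_cliqueNum
  have hQclique : G.IsClique ↑Q := hQnc.isClique
  have hQcard : Q.card = G.cliqueNum := hQnc.card_eq
  have hbddm : BddAbove {t : ℕ | ∃ f : Fin t ↪ V, IsMobileConfig G (IsMutVisSet G) f} := by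
    refine ⟨Fintype.card V, fun t ht => ?_⟩
    obtain ⟨f, _⟩ := ht
    simpa using Fintype.card_le_of_embedding f
  have hbddc : BddAbove
      {t : ℕ | ∃ f : Fin t ↪ V, IsCompletelyMobileConfig G (IsMutVisSet G) f} := by
    refine ⟨Fintype.card V, fun t ht => ?_⟩
    obtain ⟨f, _⟩ := ht
    simpa using Fintype.card_le_of_embedding f
  obtain ⟨v₀⟩ := hconn.nonempty
  have h1 : 1 ≤ G.cliqueNum := by
    have hc : G.IsClique (↑({v₀} : Finset V)) := by simp
    have := hc.card_le_cliqueNum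
    simpa using this
  have hQne : Q.Nonempty := Finset.card_pos.mp (by omega)
  set f₀ := embOf Q with hf₀
  have hr₀ : Set.range ⇑f₀ = ↑Q := range_embOf Q
  have hMV₀ : IsMutVisSet G (Set.range ⇑f₀) :=
    mutvis_subclique hconn hQclique (by rw [hr₀])
  have hvis : ∀ v : V, ∃ g, ReachMV G f₀ g ∧ ∃ i, g i = v := by
    intro v
    obtain ⟨w, hw, hmin⟩ := Finset.exists_min_image Q (fun u => G.dist v u) hQne
    have hwr : w ∈ Set.range ⇑f₀ := by rw [hr₀]; exact_mod_cast hw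
    obtain ⟨i, hi⟩ := hwr
    obtain ⟨p, hrad⟩ := radial_geodesic hconn hw hmin
    obtain ⟨g, hr, hgi, _⟩ := excursion hconn hQclique f₀ (by rw [hr₀]) i hi p hrad
      p.length (le_refl _)
    exact ⟨g, hr, i, by rw [hgi, SimpleGraph.Walk.getVert_length]⟩
  have hmob : IsMobileConfig G (IsMutVisSet G) f₀ := mobile_of_visits f₀ hMV₀ hvis
  have part1 : G.cliqueNum ≤ mobMV G := by
    rw [← hQcard]
    exact le_csSup hbddm ⟨f₀, hmob⟩
  by_cases h2 : G.cliqueNum ≤ 1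
  · refine ⟨part1, ?_⟩
    have hz : G.cliqueNum - 1 = 0 := by omega
    rw [hz]
    exact Nat.zero_le _
  · push_neg at h2
    obtain ⟨q, hq⟩ := hQne
    set Q' := Q.erase q with hQ'
    have hQ'card : Q'.card = G.cliqueNum - 1 := by
      rw [hQ', Finset.card_erase_of_mem hq, hQcard]
    set f₁ := embOf Q' with hf₁
    have hr₁ : Set.range ⇑f₁ = ↑Q' := range_embOf Q'
    have hsub : Set.range ⇑f₁ ⊆ ↑Q := by
      rw [hr₁, hQ']
      exact_mod_cast Finset.erase_subset q Q
    have hstrict : ∃ x ∈ Q, x ∉ Set.range ⇑f₁ :=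
      ⟨q, hq, by rw [hr₁]; exact_mod_cast Finset.notMem_erase q Q⟩
    have hMV₁ : IsMutVisSet G (Set.range ⇑f₁) := mutvis_subclique hconn hQclique hsub
    have ht : 0 < Q'.card := by omega
    have hvis₁ : ∀ v : V, ∃ g, ReachMV G f₁ g ∧ ∃ i, g i = v := by
      intro v
      obtain ⟨g, hr, hgi⟩ := reach_vertex hconn hQclique f₁ hsub hstrict ⟨0, ht⟩ v
      exact ⟨g, hr, ⟨0, ht⟩, hgi⟩
    have hmob₁ := mobile_of_visits f₁ hMV₁ hvis₁
    have hcomp : IsCompletelyMobileConfig G (IsMutVisSet G) f₁ := by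
      refine ⟨hmob₁, fun v i => ?_⟩
      obtain ⟨g, hr, hgi⟩ := reach_vertex hconn hQclique f₁ hsub hstrict i v
      obtain ⟨N, c, h0, hleg, hN, _⟩ := reachMV_route hr
      exact ⟨N, c, h0, hleg, N, le_refl N, by rw [hN]; exact hgi⟩
    refine ⟨part1, ?_⟩
    rw [← hQ'card]
    exact le_csSup hbddc ⟨f₁, hcomp⟩
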